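/- For every real m ≥ 10³ and every real x with 0 ≤ x ≤ m/10, f(m − x) ≥ f(m) − x·f'(m) + x²·f''(m), where f(t) = √(t/log t), f'(t) = (1 − 1/log(t))/(2√(t·log t)), and f''(t) = (−1 + 3/log²(t))/(4t·√(t·log t)). -/

import Mathlib

open Real

lemma log_gt_six {t : ℝ} (ht : 900 ≤ t) : 6 < Real.log t := by
  rw [Real.lt_log_iff_exp_lt (by linarith)]
  have h1 : Real.exp 6 = Real.exp 1 ^ 6 := by
    rw [← Real.exp_nat_mul]; norm_num
  have h2 : Real.exp 1 ^ 6 < 2.7182818286 ^ 6 :=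
    pow_lt_pow_left₀ Real.exp_one_lt_d9 (Real.exp_pos 1).le (by norm_num)
  nlinarith [h1, h2]

lemma hasDerivAt_f {t : ℝ} (ht : 900 ≤ t) :
    HasDerivAt (fun s => Real.sqrt (s / Real.log s))
      ((1 - 1 / Real.log t) / (2 * Real.sqrt (t * Real.log t))) t := by
  have ht0 : (0:ℝ) < t := by linarith
  have hL : 6 < Real.log t := log_gt_six ht
  have hL0 : 0 < Real.log t := by linarith
  have hu : HasDerivAt (fun s => s / Real.log s)
      ((Real.log t - 1) / (Real.log t) ^ 2) t := by
    have h1 : HasDerivAt (fun s : ℝ => s) 1 t := hasDerivAt_id t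
    have h2 : HasDerivAt Real.log t⁻¹ t := Real.hasDerivAt_log (ne_of_gt ht0)
    have h3 := h1.div h2 (ne_of_gt hL0)
    refine h3.congr_deriv ?_
    symm
    field_simp
  have hne : t / Real.log t ≠ 0 := ne_of_gt (div_pos ht0 hL0)
  have h := (Real.hasDerivAt_sqrt hne).comp t hu
  refine h.congr_deriv ?_
  symm
  have hst : Real.sqrt (t / Real.log t) = Real.sqrt t / Real.sqrt (Real.log t) :=
    Real.sqrt_div ht0.le _
  have hmul : Real.sqrt (t * Real.log t) = Real.sqrt t * Real.sqrt (Real.log t) :=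
    Real.sqrt_mul ht0.le _
  have hstpos : 0 < Real.sqrt t := Real.sqrt_pos.mpr ht0
  have hslpos : 0 < Real.sqrt (Real.log t) := Real.sqrt_pos.mpr hL0
  have hsq : Real.sqrt (Real.log t) ^ 2 = Real.log t := Real.sq_sqrt hL0.le
  rw [hst, hmul]
  field_simp
  linear_combination (1 - Real.log t) * hsq

lemma hasDerivAt_f' {t : ℝ} (ht : 900 ≤ t) :
    HasDerivAt (fun s => (1 - 1 / Real.log s) / (2 * Real.sqrt (s * Real.log s)))
      ((-1 + 3 / Real.log t ^ 2) / (4 * t * Real.sqrt (t * Real.log t))) t := by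
  have ht0 : (0:ℝ) < t := by linarith
  have hL : 6 < Real.log t := log_gt_six ht
  have hL0 : 0 < Real.log t := by linarith
  have htL : 0 < t * Real.log t := mul_pos ht0 hL0
  have hS : 0 < Real.sqrt (t * Real.log t) := Real.sqrt_pos.mpr htL
  have hN : HasDerivAt (fun s : ℝ => 1 - 1 / Real.log s)
      (1 / (t * Real.log t ^ 2)) t := by
    have h2 : HasDerivAt Real.log t⁻¹ t := Real.hasDerivAt_log (ne_of_gt ht0)
    have h3 := (hasDerivAt_const t (1:ℝ)).div h2 (ne_of_gt hL0)
    have h4 := (hasDerivAt_const t (1:ℝ)).sub h3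
    refine h4.congr_deriv ?_
    symm
    field_simp
    ring
  have hI : HasDerivAt (fun s : ℝ => s * Real.log s) (Real.log t + 1) t := by
    have := (hasDerivAt_id t).mul (Real.hasDerivAt_log (ne_of_gt ht0))
    refine this.congr_deriv ?_
    symm
    field_simp
    simp only [id]
    ring
  have hD : HasDerivAt (fun s : ℝ => 2 * Real.sqrt (s * Real.log s))
      (2 * (1 / (2 * Real.sqrt (t * Real.log t)) * (Real.log t + 1))) t :=
    ((Real.hasDerivAt_sqrt (ne_of_gt htL)).comp t hI).const_mul 2
  have h := hN.div hD (by positivity)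
  refine h.congr_deriv ?_
  symm
  have hab : (Real.sqrt t * Real.sqrt (Real.log t)) ^ 2 = t * Real.log t := by
    rw [mul_pow, Real.sq_sqrt ht0.le, Real.sq_sqrt hL0.le]
  field_simp
  linear_combination (4 - 4 * Real.log t ^ 2) * Real.sq_sqrt (by positivity : (0:ℝ) ≤ Real.log t * t)

lemma key_ineq {m y : ℝ} (hm : 1000 ≤ m) (hy1 : 9 * m / 10 ≤ y) (hy2 : y ≤ m) :
    2 * ((-1 + 3 / Real.log m ^ 2) / (4 * m * Real.sqrt (m * Real.log m))) ≤
      (-1 + 3 / Real.log y ^ 2) / (4 * y * Real.sqrt (y * Real.log y)) := by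
  have hy900 : (900:ℝ) ≤ y := by linarith
  have hy0 : (0:ℝ) < y := by linarith
  have hm0 : (0:ℝ) < m := by linarith
  have hLm : 6 < Real.log m := log_gt_six (by linarith)
  have hLy : 6 < Real.log y := log_gt_six hy900
  have hLm0 : 0 < Real.log m := by linarith
  have hLy0 : 0 < Real.log y := by linarith
  set Sm := Real.sqrt (m * Real.log m) with hSm_def
  set Sy := Real.sqrt (y * Real.log y) with hSy_def
  have hSm : 0 < Sm := Real.sqrt_pos.mpr (mul_pos hm0 hLm0)
  have hSy : 0 < Sy := Real.sqrt_pos.mpr (mul_pos hy0 hLy0)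
  have hdiff : Real.log m - Real.log y ≤ 1 / 9 := by
    have h1 : Real.log m - Real.log y = Real.log (m / y) :=
      (Real.log_div (ne_of_gt hm0) (ne_of_gt hy0)).symm
    have h2 : Real.log (m / y) ≤ m / y - 1 := Real.log_le_sub_one_of_pos (by positivity)
    have h3 : m / y ≤ 10 / 9 := by
      rw [div_le_div_iff₀ hy0 (by norm_num)]; linarith
    linarith
  have hLy53 : (53 / 54) * Real.log m ≤ Real.log y := by nlinarith
  have hcube : 36 * m ^ 3 * Real.log m ≤ 121 * y ^ 3 * Real.log y := by
    have hy3 : (9 / 10 * m) ^ 3 ≤ y ^ 3 :=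
      pow_le_pow_left₀ (by linarith) (by linarith) 3
    have hprod : (9 / 10 * m) ^ 3 * ((53 / 54) * Real.log m) ≤ y ^ 3 * Real.log y :=
      mul_le_mul hy3 hLy53 (by positivity) (by positivity)
    nlinarith [pow_pos hm0 3, hLm0]
  have hAB : 6 * m * Sm ≤ 11 * y * Sy := by
    have hA : 6 * m * Sm = Real.sqrt (36 * m ^ 3 * Real.log m) := by
      rw [show 36 * m ^ 3 * Real.log m = (6 * m) ^ 2 * (m * Real.log m) by ring,
        Real.sqrt_mul (by positivity), Real.sqrt_sq (by positivity)]
    have hB : 11 * y * Sy = Real.sqrt (121 * y ^ 3 * Real.log y) := by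
      rw [show 121 * y ^ 3 * Real.log y = (11 * y) ^ 2 * (y * Real.log y) by ring,
        Real.sqrt_mul (by positivity), Real.sqrt_sq (by positivity)]
    rw [hA, hB]
    exact Real.sqrt_le_sqrt hcube
  have hnum_m : -1 + 3 / Real.log m ^ 2 ≤ -11 / 12 := by
    have : 3 / Real.log m ^ 2 ≤ 1 / 12 := by
      rw [div_le_div_iff₀ (by positivity) (by norm_num)]; nlinarith
    linarith
  have hnum_y : (-1 : ℝ) ≤ -1 + 3 / Real.log y ^ 2 := by
    have : 0 ≤ 3 / Real.log y ^ 2 := by positivity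
    linarith
  calc 2 * ((-1 + 3 / Real.log m ^ 2) / (4 * m * Sm))
      ≤ (-1 : ℝ) / (4 * y * Sy) := by
        rw [mul_div_assoc' 2 _ _, div_le_div_iff₀ (by positivity) (by positivity)]
        have hstep : (2 * (-1 + 3 / Real.log m ^ 2)) * (4 * y * Sy)
            ≤ (2 * (-11 / 12)) * (4 * y * Sy) := by
          apply mul_le_mul_of_nonneg_right _ (by positivity)
          linarith
        nlinarith [hAB, hSy, hSm, hy0, hm0]
    _ ≤ (-1 + 3 / Real.log y ^ 2) / (4 * y * Sy) :=
        (div_le_div_iff_of_pos_right (by positivity)).mpr hnum_y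

/-- Second-order bound: for `m ≥ 10³` and `0 ≤ x ≤ m/10`,
`f(m-x) ≥ f(m) - x f'(m) + x² f''(m)` where `f(t) = √(t/log t)`,
`f'(t) = (1 - 1/log t)/(2√(t log t))` and `f''(t) = (-1 + 3/log² t)/(4t√(t log t))`. -/
theorem f_second_order_lower (m x : ℝ) (hm : 10 ^ 3 ≤ m) (hx : 0 ≤ x) (hxm : x ≤ m / 10) :
    Real.sqrt ((m - x) / Real.log (m - x)) ≥
      Real.sqrt (m / Real.log m) -
        x * ((1 - 1 / Real.log m) / (2 * Real.sqrt (m * Real.log m))) +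
        x ^ 2 * ((-1 + 3 / Real.log m ^ 2) / (4 * m * Real.sqrt (m * Real.log m))) := by
  have hm1000 : (1000:ℝ) ≤ m := by norm_num at hm; linarith
  set c1 := (1 - 1 / Real.log m) / (2 * Real.sqrt (m * Real.log m)) with hc1
  set c2 := (-1 + 3 / Real.log m ^ 2) / (4 * m * Real.sqrt (m * Real.log m)) with hc2
  set G : ℝ → ℝ := fun z =>
    Real.sqrt ((m - z) / Real.log (m - z)) - Real.sqrt (m / Real.log m)
      + z * c1 - z ^ 2 * c2 with hG_def
  set G' : ℝ → ℝ := fun z =>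
    -((1 - 1 / Real.log (m - z)) / (2 * Real.sqrt ((m - z) * Real.log (m - z))))
      + c1 - 2 * z * c2 with hG'_def
  have hmem : ∀ z ∈ Set.Icc (0:ℝ) (m/10), (900:ℝ) ≤ m - z := by
    intro z hz
    obtain ⟨h1, h2⟩ := hz
    linarith
  have hinner : ∀ z : ℝ, HasDerivAt (fun w : ℝ => m - w) (-1) z := by
    intro z
    exact ((hasDerivAt_const z m).sub (hasDerivAt_id z)).congr_deriv (by norm_num)
  have hGderiv : ∀ z ∈ Set.Icc (0:ℝ) (m/10), HasDerivAt G (G' z) z := by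
    intro z hz
    have h900 := hmem z hz
    have h1 := (hasDerivAt_f h900).comp z (hinner z)
    have h2 : HasDerivAt (fun w : ℝ => w * c1) c1 z := by
      simpa using (hasDerivAt_id z).mul_const c1
    have h3 : HasDerivAt (fun w : ℝ => w ^ 2 * c2) (2 * z * c2) z := by
      have h := (hasDerivAt_pow 2 z).mul_const c2
      have : ((2:ℕ):ℝ) * z ^ (2-1) * c2 = 2 * z * c2 := by push_cast; ring
      rwa [this] at h
    have h4 : HasDerivAt G
        ((1 - 1 / Real.log (m - z)) / (2 * Real.sqrt ((m - z) * Real.log (m - z))) * (-1)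
          - Real.sqrt (m / Real.log m) * 0 + c1 - 2 * z * c2) z := by
      have h5 := ((h1.sub_const (Real.sqrt (m / Real.log m))).add h2).sub h3
      have : (1 - 1 / Real.log (m - z)) / (2 * Real.sqrt ((m - z) * Real.log (m - z))) * (-1)
          - Real.sqrt (m / Real.log m) * 0 + c1 - 2 * z * c2
          = (1 - 1 / Real.log (m - z)) / (2 * Real.sqrt ((m - z) * Real.log (m - z))) * (-1)
            + c1 - 2 * z * c2 := by ring
      rw [this]
      exact h5
    have heq : G' z = (1 - 1 / Real.log (m - z)) / (2 * Real.sqrt ((m - z) * Real.log (m - z))) * (-1)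
        - Real.sqrt (m / Real.log m) * 0 + c1 - 2 * z * c2 := by
      simp only [hG'_def]
      ring
    rw [heq]
    exact h4
  have hG'deriv : ∀ z ∈ Set.Icc (0:ℝ) (m/10),
      HasDerivAt G' ((-1 + 3 / Real.log (m - z) ^ 2) /
        (4 * (m - z) * Real.sqrt ((m - z) * Real.log (m - z))) - 2 * c2) z := by
    intro z hz
    have h900 := hmem z hz
    have h1 := (hasDerivAt_f' h900).comp z (hinner z)
    have h2 : HasDerivAt (fun w : ℝ => 2 * w * c2) (2 * c2) z := by
      have h := ((hasDerivAt_id z).const_mul 2).mul_const c2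
      have : (2:ℝ) * 1 * c2 = 2 * c2 := by ring
      rwa [this] at h
    have h4 : HasDerivAt G'
        (-((-1 + 3 / Real.log (m - z) ^ 2) /
          (4 * (m - z) * Real.sqrt ((m - z) * Real.log (m - z))) * (-1)) - 2 * c2) z :=
      ((h1.neg).add_const c1).sub h2
    have heq : (-1 + 3 / Real.log (m - z) ^ 2) /
        (4 * (m - z) * Real.sqrt ((m - z) * Real.log (m - z))) - 2 * c2
        = -((-1 + 3 / Real.log (m - z) ^ 2) /
          (4 * (m - z) * Real.sqrt ((m - z) * Real.log (m - z))) * (-1)) - 2 * c2 := by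
      ring
    rw [heq]
    exact h4
  have hG'mono : MonotoneOn G' (Set.Icc (0:ℝ) (m/10)) := by
    apply monotoneOn_of_deriv_nonneg (convex_Icc _ _)
    · intro z hz
      exact (hG'deriv z hz).continuousAt.continuousWithinAt
    · intro z hz
      rw [interior_Icc] at hz
      exact ((hG'deriv z (Set.Ioo_subset_Icc_self hz)).differentiableAt).differentiableWithinAt
    · intro z hz
      rw [interior_Icc] at hz
      have hz' := Set.Ioo_subset_Icc_self hz
      rw [(hG'deriv z hz').deriv]
      have hk := key_ineq hm1000 (show 9 * m / 10 ≤ m - z by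
        obtain ⟨a, b⟩ := hz'; linarith) (by obtain ⟨a, b⟩ := hz'; linarith)
      rw [← hc2] at hk
      linarith
  have h0mem : (0:ℝ) ∈ Set.Icc (0:ℝ) (m/10) := ⟨le_refl 0, by linarith⟩
  have hG'0 : G' 0 = 0 := by
    simp only [hG'_def, hc1]
    norm_num
  have hG'nonneg : ∀ z ∈ Set.Icc (0:ℝ) (m/10), 0 ≤ G' z := by
    intro z hz
    have := hG'mono h0mem hz hz.1
    rw [hG'0] at this
    exact this
  have hGmono : MonotoneOn G (Set.Icc (0:ℝ) (m/10)) := by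
    apply monotoneOn_of_deriv_nonneg (convex_Icc _ _)
    · intro z hz
      exact (hGderiv z hz).continuousAt.continuousWithinAt
    · intro z hz
      rw [interior_Icc] at hz
      exact ((hGderiv z (Set.Ioo_subset_Icc_self hz)).differentiableAt).differentiableWithinAt
    · intro z hz
      rw [interior_Icc] at hz
      have hz' := Set.Ioo_subset_Icc_self hz
      rw [(hGderiv z hz').deriv]
      exact hG'nonneg z hz'
  have hG0 : G 0 = 0 := by
    simp only [hG_def]
    norm_num
  have hxmem : x ∈ Set.Icc (0:ℝ) (m/10) := ⟨hx, hxm⟩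
  have hfin : 0 ≤ G x := by
    have := hGmono h0mem hxmem hx
    rw [hG0] at this
    exact this
  have hfin2 : 0 ≤ Real.sqrt ((m - x) / Real.log (m - x)) - Real.sqrt (m / Real.log m)
      + x * c1 - x ^ 2 * c2 := hfin
  rw [ge_iff_le]
  linarith
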